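/- The number of bridges of length m+n starting at a fixed vertex is supermultiplicative: b_{m+n} ≥ b_m · b_n, where b_n denotes the number of n-step bridges. -/

import Mathlib

open Filter
open scoped Classical

variable {Γ : Type*} [Group Γ]

/-- The Cayley graph of a group with (not necessarily symmetric) generating set `S`. -/
def cayley (S : Set Γ) : SimpleGraph Γ where
  Adj x y := x ≠ y ∧ (x⁻¹ * y ∈ S ∨ y⁻¹ * x ∈ S)
  symm := ⟨fun x y h => ⟨h.1.symm, h.2.symm⟩⟩
  loopless := ⟨fun x h => h.1 rfl⟩

/-- The antisymmetric edge weight attached to the distinguished generator `s₁`. -/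
noncomputable def wt (s₁ : Γ) (x y : Γ) : ℤ :=
  if x⁻¹ * y = s₁ then 1 else if x⁻¹ * y = s₁⁻¹ then -1 else 0

/-- An `n`-step walk from the identity in the Cayley graph, frozen after time `n`. -/
def IsWalkFrom (S : Set Γ) (n : ℕ) (ω : ℕ → Γ) : Prop :=
  ω 0 = 1 ∧ (∀ i < n, (cayley S).Adj (ω i) (ω (i+1))) ∧ ∀ i, n ≤ i → ω i = ω n

/-- An `n`-step self-avoiding walk from the identity. -/
def IsSAWFrom (S : Set Γ) (n : ℕ) (ω : ℕ → Γ) : Prop :=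
  IsWalkFrom S n ω ∧ ∀ i ≤ n, ∀ j ≤ n, ω i = ω j → i = j

/-- The number of `n`-step self-avoiding walks from a fixed vertex. -/
noncomputable def sawCount (S : Set Γ) (n : ℕ) : ℕ :=
  Nat.card {ω : ℕ → Γ // IsSAWFrom S n ω}

/-- The height of step `s` of a walk, via the `±1` weight on `s₁`-edges. -/
noncomputable def height (s₁ : Γ) (ω : ℕ → Γ) (s : ℕ) : ℤ :=
  ∑ i ∈ Finset.range s, wt s₁ (ω i) (ω (i+1))

/-- An `n`-step bridge: `h_0 < h_s ≤ h_n` for `1 ≤ s ≤ n`. -/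
noncomputable def IsBridge (S : Set Γ) (s₁ : Γ) (n : ℕ) (ω : ℕ → Γ) : Prop :=
  IsSAWFrom S n ω ∧ ∀ s, 1 ≤ s → s ≤ n →
    0 < height s₁ ω s ∧ height s₁ ω s ≤ height s₁ ω n

/-- The number of `n`-step bridges from a fixed vertex. -/
noncomputable def bridgeCount (S : Set Γ) (s₁ : Γ) (n : ℕ) : ℕ :=
  Nat.card {ω : ℕ → Γ // IsBridge S s₁ n ω}

/-- An `n`-step half-space walk: `h_0 < h_s` for `1 ≤ s ≤ n`. -/
def IsHalfSpace (S : Set Γ) (s₁ : Γ) (n : ℕ) (ω : ℕ → Γ) : Prop :=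
  IsSAWFrom S n ω ∧ ∀ s, 1 ≤ s → s ≤ n → 0 < height s₁ ω s

/-- The number of `n`-step half-space walks from a fixed vertex. -/
noncomputable def hswCount (S : Set Γ) (s₁ : Γ) (n : ℕ) : ℕ :=
  Nat.card {ω : ℕ → Γ // IsHalfSpace S s₁ n ω}

/-- The span of an `n`-step walk: `max_s h_s - min_s h_s`. -/
noncomputable def wspan (s₁ : Γ) (n : ℕ) (ω : ℕ → Γ) : ℤ :=
  ((Finset.range (n+1)).sup' Finset.nonempty_range_add_one (height s₁ ω)) -
    ((Finset.range (n+1)).inf' Finset.nonempty_range_add_one (height s₁ ω))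

/-- The number of `n`-step bridges of span `A` from a fixed vertex. -/
noncomputable def bridgeSpanCount (S : Set Γ) (s₁ : Γ) (n A : ℕ) : ℕ :=
  Nat.card {ω : ℕ → Γ // IsBridge S s₁ n ω ∧ wspan s₁ n ω = A}

/-- `s₁` is a generator of infinite order, independent (free) from the remaining
generators: the group is the free product of `⟨s₁⟩` and the subgroup generated
by the other generators. -/
def IsIndepGen (S : Set Γ) (s₁ : Γ) : Prop :=
  s₁ ∈ S ∧ ¬ IsOfFinOrder s₁ ∧
  Function.Bijective
    (Monoid.Coprod.lift (Subgroup.closure (S \ {s₁, s₁⁻¹})).subtype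
      (Subgroup.zpowers s₁).subtype)

/-- The connective constant of the Cayley graph of `(Γ, S)`, as `inf_n c_n^(1/n)`. -/
noncomputable def connConst (S : Set Γ) : ℝ :=
  ⨅ n : {n : ℕ // 0 < n}, (sawCount S n.1 : ℝ) ^ (1 / (n.1 : ℝ))

/-- The number of partitions of `n` into distinct parts. -/
def PD (n : ℕ) : ℕ := (Nat.Partition.distincts n).card



lemma adj_step_mem {S : Set Γ} {x y : Γ} (h : (cayley S).Adj x y) :
    x⁻¹ * y ∈ S ∪ S⁻¹ := by
  rcases h.2 with h2 | h2
  · exact Set.mem_union_left _ h2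
  · refine Set.mem_union_right _ ?_
    rw [Set.mem_inv]
    simpa [mul_inv_rev] using h2

lemma walkFrom_finite (S : Set Γ) (hSfin : S.Finite) (N : ℕ) :
    Finite {ω : ℕ → Γ // IsWalkFrom S N ω} := by
  have hT : (S ∪ S⁻¹).Finite := hSfin.union hSfin.inv
  haveI : Finite ↥(S ∪ S⁻¹) := hT
  refine Finite.of_injective
    (fun ω : {ω : ℕ → Γ // IsWalkFrom S N ω} =>
      fun i : Fin N => (⟨(ω.1 i.1)⁻¹ * ω.1 (i.1+1),
        adj_step_mem (ω.2.2.1 i.1 i.2)⟩ : ↥(S ∪ S⁻¹))) ?_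
  intro ω ω' h
  have key : ∀ i, i ≤ N → ω.1 i = ω'.1 i := by
    intro i
    induction i with
    | zero => intro _; rw [ω.2.1, ω'.2.1]
    | succ i ih =>
      intro hi
      have hiN : i < N := hi
      have h1 := congrFun h ⟨i, hiN⟩
      have h2 : (ω.1 i)⁻¹ * ω.1 (i+1) = (ω'.1 i)⁻¹ * ω'.1 (i+1) :=
        congrArg Subtype.val h1
      have h3 := ih hiN.le
      calc ω.1 (i+1) = ω.1 i * ((ω.1 i)⁻¹ * ω.1 (i+1)) := by group
        _ = ω'.1 i * ((ω'.1 i)⁻¹ * ω'.1 (i+1)) := by rw [h2, h3]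
        _ = ω'.1 (i+1) := by group
  apply Subtype.ext; funext i
  rcases le_or_gt i N with hi | hi
  · exact key i hi
  · rw [ω.2.2.2 i hi.le, ω'.2.2.2 i hi.le, key N le_rfl]

lemma bridge_finite (S : Set Γ) (hSfin : S.Finite) (s₁ : Γ) (N : ℕ) :
    Finite {ω : ℕ → Γ // IsBridge S s₁ N ω} := by
  haveI := walkFrom_finite S hSfin N
  exact Finite.of_injective
    (fun ω : {ω : ℕ → Γ // IsBridge S s₁ N ω} =>
      (⟨ω.1, ω.2.1.1⟩ : {ω : ℕ → Γ // IsWalkFrom S N ω}))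
    (by intro a b h; apply Subtype.ext; exact congrArg (fun z : {ω : ℕ → Γ // IsWalkFrom S N ω} => z.1) h)

lemma zexp_eq {s₁ : Γ} (h : ¬IsOfFinOrder s₁) {x : Γ}
    (hx : x ∈ Subgroup.zpowers s₁) {k : ℤ} (hk : s₁ ^ k = x) :
    Classical.choose (Subgroup.mem_zpowers_iff.mp hx) = k := by
  apply injective_zpow_iff_not_isOfFinOrder.mpr h
  show s₁ ^ _ = s₁ ^ k
  rw [Classical.choose_spec (Subgroup.mem_zpowers_iff.mp hx), hk]

noncomputable def zhom (s₁ : Γ) (h : ¬IsOfFinOrder s₁) :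
    ↥(Subgroup.zpowers s₁) →* Multiplicative ℤ where
  toFun x := Multiplicative.ofAdd (Classical.choose (Subgroup.mem_zpowers_iff.mp x.2))
  map_one' := by
    have h0 := zexp_eq h (1 : ↥(Subgroup.zpowers s₁)).2 (k := 0) (by simp)
    show Multiplicative.ofAdd _ = 1
    rw [h0]
    rfl
  map_mul' x y := by
    have hx := Classical.choose_spec (Subgroup.mem_zpowers_iff.mp x.2)
    have hy := Classical.choose_spec (Subgroup.mem_zpowers_iff.mp y.2)
    have hxy : s₁ ^ (Classical.choose (Subgroup.mem_zpowers_iff.mp x.2) +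
        Classical.choose (Subgroup.mem_zpowers_iff.mp y.2)) = ((x * y : ↥(Subgroup.zpowers s₁)) : Γ) := by
      rw [zpow_add, hx, hy]; rfl
    have h0 := zexp_eq h (x * y).2 hxy
    show Multiplicative.ofAdd _ = _
    rw [h0]
    rfl

noncomputable def phiHom (S : Set Γ) (s₁ : Γ) (hind : IsIndepGen S s₁) :
    Γ →* Multiplicative ℤ :=
  (Monoid.Coprod.lift 1 (zhom s₁ hind.2.1)).comp
    (MulEquiv.ofBijective _ hind.2.2).symm.toMonoidHom

noncomputable def hgt (S : Set Γ) (s₁ : Γ) (hind : IsIndepGen S s₁) (g : Γ) : ℤ :=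
  Multiplicative.toAdd (phiHom S s₁ hind g)

lemma hgt_mul (S : Set Γ) (s₁ : Γ) (hind : IsIndepGen S s₁) (x y : Γ) :
    hgt S s₁ hind (x * y) = hgt S s₁ hind x + hgt S s₁ hind y := by
  unfold hgt; rw [map_mul]; rfl

lemma hgt_one (S : Set Γ) (s₁ : Γ) (hind : IsIndepGen S s₁) :
    hgt S s₁ hind 1 = 0 := by
  unfold hgt; rw [map_one]; rfl

lemma hgt_inv (S : Set Γ) (s₁ : Γ) (hind : IsIndepGen S s₁) (x : Γ) :
    hgt S s₁ hind x⁻¹ = - hgt S s₁ hind x := by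
  unfold hgt; rw [map_inv]; rfl

lemma hgt_s₁ (S : Set Γ) (s₁ : Γ) (hind : IsIndepGen S s₁) :
    hgt S s₁ hind s₁ = 1 := by
  have he : (MulEquiv.ofBijective _ hind.2.2)
      (Monoid.Coprod.inr ⟨s₁, Subgroup.mem_zpowers s₁⟩) = s₁ := by
    rw [MulEquiv.ofBijective_apply]; exact Monoid.Coprod.lift_apply_inr (Subgroup.closure (S \ {s₁, s₁⁻¹})).subtype (Subgroup.zpowers s₁).subtype _
  have hsymm : (MulEquiv.ofBijective _ hind.2.2).symm s₁ =
      Monoid.Coprod.inr ⟨s₁, Subgroup.mem_zpowers s₁⟩ := by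
    rw [MulEquiv.symm_apply_eq, he]
  have hz := zexp_eq hind.2.1
    (⟨s₁, Subgroup.mem_zpowers s₁⟩ : ↥(Subgroup.zpowers s₁)).2 (k := 1) (zpow_one s₁)
  unfold hgt phiHom
  simp only [MonoidHom.comp_apply, MulEquiv.coe_toMonoidHom, hsymm,
    Monoid.Coprod.lift_apply_inr, zhom, MonoidHom.coe_mk, OneHom.coe_mk, toAdd_ofAdd]
  exact hz

lemma hgt_closure (S : Set Γ) (s₁ : Γ) (hind : IsIndepGen S s₁) {g : Γ}
    (hg : g ∈ Subgroup.closure (S \ {s₁, s₁⁻¹})) :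
    hgt S s₁ hind g = 0 := by
  have he : (MulEquiv.ofBijective _ hind.2.2)
      (Monoid.Coprod.inl ⟨g, hg⟩) = g := by
    rw [MulEquiv.ofBijective_apply]; exact Monoid.Coprod.lift_apply_inl (Subgroup.closure (S \ {s₁, s₁⁻¹})).subtype (Subgroup.zpowers s₁).subtype _
  have hsymm : (MulEquiv.ofBijective _ hind.2.2).symm g =
      Monoid.Coprod.inl ⟨g, hg⟩ := by
    rw [MulEquiv.symm_apply_eq, he]
  unfold hgt phiHom
  simp [MonoidHom.comp_apply, hsymm, Monoid.Coprod.lift_apply_inl]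

lemma wt_eq_hgt (S : Set Γ) (s₁ : Γ) (hind : IsIndepGen S s₁) {x y : Γ}
    (hadj : (cayley S).Adj x y) :
    wt s₁ x y = hgt S s₁ hind y - hgt S s₁ hind x := by
  have hy : y = x * (x⁻¹ * y) := by group
  have hsub : hgt S s₁ hind y - hgt S s₁ hind x = hgt S s₁ hind (x⁻¹ * y) := by
    conv_lhs => rw [hy, hgt_mul]
    ring
  rw [hsub]
  unfold wt
  by_cases h1 : x⁻¹ * y = s₁
  · rw [if_pos h1, h1, hgt_s₁]
  by_cases h2 : x⁻¹ * y = s₁⁻¹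
  · rw [if_neg h1, if_pos h2, h2, hgt_inv, hgt_s₁]
  rw [if_neg h1, if_neg h2]
  rcases adj_step_mem hadj with hm | hm
  · exact (hgt_closure S s₁ hind (Subgroup.subset_closure ⟨hm, by simp [h1, h2]⟩)).symm
  · have hm' : y⁻¹ * x ∈ S := by
      have h3 := Set.mem_inv.mp hm
      simpa [mul_inv_rev] using h3
    have key : x⁻¹ * y = (y⁻¹ * x)⁻¹ := by group
    have h1'' : y⁻¹ * x ≠ s₁ := fun hc => h2 (by rw [key, hc])
    have h2'' : y⁻¹ * x ≠ s₁⁻¹ := fun hc => h1 (by rw [key, hc, inv_inv])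
    have h0 := hgt_closure S s₁ hind (Subgroup.subset_closure
      (⟨hm', by simp [h1'', h2'']⟩ : y⁻¹ * x ∈ S \ {s₁, s₁⁻¹}))
    have hz : hgt S s₁ hind (x⁻¹ * y) = 0 := by rw [key, hgt_inv, h0]; ring
    omega

lemma height_eq_hgt (S : Set Γ) (s₁ : Γ) (hind : IsIndepGen S s₁) {n : ℕ} {ω : ℕ → Γ}
    (hw : IsWalkFrom S n ω) : ∀ s, s ≤ n → height s₁ ω s = hgt S s₁ hind (ω s) := by
  intro s
  induction s with
  | zero => intro _; simp [height, hw.1, hgt_one]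
  | succ s ih =>
    intro hs
    have hsn : s < n := hs
    rw [height, Finset.sum_range_succ, ← height, ih hsn.le,
      wt_eq_hgt S s₁ hind (hw.2.1 s hsn)]
    ring

lemma cayley_adj_mul {S : Set Γ} (g : Γ) {a b : Γ} (h : (cayley S).Adj a b) :
    (cayley S).Adj (g * a) (g * b) := by
  refine ⟨fun hc => h.1 (mul_left_cancel hc), ?_⟩
  have h1 : (g * a)⁻¹ * (g * b) = a⁻¹ * b := by group
  have h2 : (g * b)⁻¹ * (g * a) = b⁻¹ * a := by group
  rw [h1, h2]; exact h.2

lemma concat_bridge (S : Set Γ) (s₁ : Γ) (hind : IsIndepGen S s₁) {m n : ℕ}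
    {ω ω' : ℕ → Γ} (hb : IsBridge S s₁ m ω) (hb' : IsBridge S s₁ n ω') :
    IsBridge S s₁ (m + n) (fun i => if i ≤ m then ω i else ω m * ω' (i - m)) := by
  set φ := hgt S s₁ hind with hφ
  obtain ⟨⟨⟨hω0, hωadj, hωfr⟩, hωSA⟩, hωbr⟩ := hb
  obtain ⟨⟨⟨hω'0, hω'adj, hω'fr⟩, hω'SA⟩, hω'br⟩ := hb'
  set χ : ℕ → Γ := fun i => if i ≤ m then ω i else ω m * ω' (i - m) with hχ
  have hχle : ∀ i ≤ m, χ i = ω i := fun i hi => if_pos hi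
  have hχge : ∀ i, m ≤ i → χ i = ω m * ω' (i - m) := by
    intro i hi
    rcases eq_or_lt_of_le hi with rfl | hlt
    · rw [hχle m le_rfl]
      simp [hω'0]
    · simp only [hχ]
      rw [if_neg (by omega)]
  have hwalk : IsWalkFrom S (m + n) χ := by
    refine ⟨by rw [hχle 0 (Nat.zero_le m), hω0], ?_, ?_⟩
    · intro i hi
      rcases lt_or_ge i m with him | him
      · rw [hχle i him.le, hχle (i+1) him]
        exact hωadj i him
      · rw [hχge i him, hχge (i+1) (by omega)]
        have hst : i + 1 - m = (i - m) + 1 := by omega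
        rw [hst]
        exact cayley_adj_mul _ (hω'adj (i - m) (by omega))
    · intro i hi
      rw [hχge i (by omega), hχge (m+n) (by omega)]
      have h1 : m + n - m = n := by omega
      rw [h1, hω'fr (i - m) (by omega)]
  have hhω : ∀ s ≤ m, height s₁ ω s = φ (ω s) :=
    height_eq_hgt S s₁ hind ⟨hω0, hωadj, hωfr⟩
  have hhω' : ∀ s ≤ n, height s₁ ω' s = φ (ω' s) :=
    height_eq_hgt S s₁ hind ⟨hω'0, hω'adj, hω'fr⟩
  have hh : ∀ s ≤ m + n, height s₁ χ s = φ (χ s) :=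
    height_eq_hgt S s₁ hind hwalk
  have hφω0 : φ (ω 0) = 0 := by rw [← hhω 0 (Nat.zero_le m)]; simp [height]
  have hφω'0 : φ (ω' 0) = 0 := by rw [← hhω' 0 (Nat.zero_le n)]; simp [height]
  have hωpos : ∀ s, 1 ≤ s → s ≤ m → 0 < φ (ω s) := by
    intro s h1 h2
    have := (hωbr s h1 h2).1; rwa [hhω s h2] at this
  have hω'pos : ∀ s, 1 ≤ s → s ≤ n → 0 < φ (ω' s) := by
    intro s h1 h2
    have := (hω'br s h1 h2).1; rwa [hhω' s h2] at this
  have hωm_nonneg : 0 ≤ φ (ω m) := by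
    rcases Nat.eq_zero_or_pos m with hm | hm
    · rw [hm, hφω0]
    · exact (hωpos m hm le_rfl).le
  have hω'n_nonneg : 0 ≤ φ (ω' n) := by
    rcases Nat.eq_zero_or_pos n with hn | hn
    · rw [hn, hφω'0]
    · exact (hω'pos n hn le_rfl).le
  have hωle : ∀ s ≤ m, φ (ω s) ≤ φ (ω m) := by
    intro s hs
    rcases Nat.eq_zero_or_pos s with h1 | h1
    · rw [h1, hφω0]; exact hωm_nonneg
    · have := (hωbr s h1 hs).2
      rwa [hhω s hs, hhω m le_rfl] at this
  have hω'le : ∀ s ≤ n, φ (ω' s) ≤ φ (ω' n) := by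
    intro s hs
    rcases Nat.eq_zero_or_pos s with h1 | h1
    · rw [h1, hφω'0]; exact hω'n_nonneg
    · have := (hω'br s h1 hs).2
      rwa [hhω' s hs, hhω' n le_rfl] at this
  have hχval : ∀ s, m ≤ s → φ (χ s) = φ (ω m) + φ (ω' (s - m)) := by
    intro s hs
    rw [hχge s hs]
    exact hgt_mul S s₁ hind _ _
  have hSA : ∀ i ≤ m + n, ∀ j ≤ m + n, χ i = χ j → i = j := by
    have main : ∀ i ≤ m, ∀ j, m < j → j ≤ m + n → χ i ≠ χ j := by
      intro i hi j hj1 hj2 hc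
      have h1 : φ (χ i) ≤ φ (ω m) := by rw [hχle i hi]; exact hωle i hi
      have h2 : φ (ω m) < φ (χ j) := by
        rw [hχval j hj1.le]
        have := hω'pos (j - m) (by omega) (by omega)
        omega
      rw [hc] at h1; omega
    intro i hi j hj hc
    rcases le_or_gt i m with him | him <;> rcases le_or_gt j m with hjm | hjm
    · exact hωSA i him j hjm (by rwa [hχle i him, hχle j hjm] at hc)
    · exact absurd hc (main i him j hjm hj)
    · exact absurd hc.symm (main j hjm i him hi)
    · rw [hχge i him.le, hχge j hjm.le] at hc
      have := hω'SA (i - m) (by omega) (j - m) (by omega) (mul_left_cancel hc)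
      omega
  refine ⟨⟨hwalk, hSA⟩, ?_⟩
  intro s h1 h2
  have hend : φ (χ (m + n)) = φ (ω m) + φ (ω' n) := by
    have h3 : m + n - m = n := by omega
    rw [hχval (m + n) (Nat.le_add_right m n), h3]
  rw [hh s h2, hh (m + n) le_rfl, hend]
  rcases le_or_gt s m with hsm | hsm
  · rw [hχle s hsm]
    have hle := hωle s hsm
    exact ⟨hωpos s h1 hsm, by omega⟩
  · rw [hχval s hsm.le]
    have hp := hω'pos (s - m) (by omega) (by omega)
    have hl := hω'le (s - m) (by omega)
    omega


/-- In a Cayley graph of an infinite group whose finite generating set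
contains an infinite-order generator `s₁` independent of the other generators,
bridge counts are supermultiplicative: `b (m+n) ≥ b m * b n`. -/
theorem bridge_count_supermultiplicative {Γ : Type*} [Group Γ] [Infinite Γ]
    (S : Set Γ) (hSfin : S.Finite) (hgen : Subgroup.closure S = ⊤)
    (s₁ : Γ) (hind : IsIndepGen S s₁) (m n : ℕ) :
    bridgeCount S s₁ m * bridgeCount S s₁ n ≤ bridgeCount S s₁ (m + n) := by
  haveI hfin : Finite {ω : ℕ → Γ // IsBridge S s₁ (m + n) ω} :=
    bridge_finite S hSfin s₁ (m + n)
  set F : {ω : ℕ → Γ // IsBridge S s₁ m ω} × {ω : ℕ → Γ // IsBridge S s₁ n ω} →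
      {ω : ℕ → Γ // IsBridge S s₁ (m + n) ω} :=
    fun p => ⟨fun i => if i ≤ m then p.1.1 i else p.1.1 m * p.2.1 (i - m),
      concat_bridge S s₁ hind p.1.2 p.2.2⟩ with hF
  have hinj : Function.Injective F := by
    intro p q h
    have hval : (F p).1 = (F q).1 :=
      congrArg (fun z : {ω : ℕ → Γ // IsBridge S s₁ (m + n) ω} => z.1) h
    have h1 : p.1.1 = q.1.1 := by
      funext i
      have e1 := congrFun hval (min i m)
      simp only [hF, if_pos (min_le_right i m)] at e1
      rcases le_or_gt i m with hi | hi
      · rwa [min_eq_left hi] at e1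
      · rw [min_eq_right hi.le] at e1
        rw [p.1.2.1.1.2.2 i hi.le, q.1.2.1.1.2.2 i hi.le]
        exact e1
    have key : ∀ k ≤ n, p.2.1 k = q.2.1 k := by
      intro k hk
      rcases Nat.eq_zero_or_pos k with hk0 | hkpos
      · rw [hk0, p.2.2.1.1.1, q.2.2.1.1.1]
      · have e2 := congrFun hval (m + k)
        simp only [hF, if_neg (by omega : ¬ m + k ≤ m)] at e2
        have h3 : m + k - m = k := by omega
        rw [h3, h1] at e2
        exact mul_left_cancel e2
    have h2 : p.2.1 = q.2.1 := by
      funext j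
      rcases le_or_gt j n with hj | hj
      · exact key j hj
      · rw [p.2.2.1.1.2.2 j hj.le, q.2.2.1.1.2.2 j hj.le, key n le_rfl]
    exact Prod.ext (Subtype.ext h1) (Subtype.ext h2)
  calc bridgeCount S s₁ m * bridgeCount S s₁ n
      = Nat.card ({ω : ℕ → Γ // IsBridge S s₁ m ω} ×
          {ω : ℕ → Γ // IsBridge S s₁ n ω}) := (Nat.card_prod _ _).symm
    _ ≤ bridgeCount S s₁ (m + n) := Nat.card_le_card_of_injective F hinj
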